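/- Let G ⊆ GL(n, ℂ) be a group acting irreducibly on ℂⁿ such that the set of traces {tr(g) : g ∈ G} is finite. Then G is finite. -/

import Mathlib

open Module LinearMap Set
open scoped Matrix

variable {K V : Type*} [Field K] [AddCommGroup V] [Module K V] [FiniteDimensional K V]

lemma trace_pow_restrict_maxGen (f : Module.End K V) (μ : K) (k : ℕ) :
    LinearMap.trace K _ ((f.restrict (f.mapsTo_maxGenEigenspace_of_comm rfl μ)) ^ k)
      = μ ^ k * (Module.finrank K (f.maxGenEigenspace μ) : K) := by
  set g := f.restrict (f.mapsTo_maxGenEigenspace_of_comm rfl μ) with hg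
  have hnil : IsNilpotent (g - algebraMap K _ μ) := by
    have h := f.isNilpotent_restrict_maxGenEigenspace_sub_algebraMap μ
    have : (f - algebraMap K (Module.End K V) μ).restrict
        (f.mapsTo_maxGenEigenspace_of_comm (Algebra.mul_sub_algebraMap_commutes f μ) μ)
        = g - algebraMap K _ μ := by
      ext x
      simp [LinearMap.restrict_apply, hg, Algebra.algebraMap_eq_smul_one]
      rfl
    rwa [this] at h
  induction k with
  | zero => simp [LinearMap.trace_one]
  | succ k ih =>
    rw [pow_succ, Module.End.mul_eq_comp,
      LinearMap.trace_comp_eq_mul_of_commute_of_isNilpotent μ ((Commute.refl g).pow_left k) hnil,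
      ih, pow_succ]
    ring

lemma isNilpotent_of_trace_pow_eq_zero [IsAlgClosed K] [CharZero K] (f : Module.End K V)
    (h : ∀ k : ℕ, 1 ≤ k → LinearMap.trace K V (f ^ k) = 0) : IsNilpotent f := by
  classical
  have hmt : ∀ μ : K, Set.MapsTo f (f.maxGenEigenspace μ) (f.maxGenEigenspace μ) :=
    fun μ => f.mapsTo_maxGenEigenspace_of_comm rfl μ
  have hfin : {μ : K | f.maxGenEigenspace μ ≠ ⊥}.Finite :=
    WellFoundedGT.finite_ne_bot_of_iSupIndep f.independent_maxGenEigenspace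
  have hds := DirectSum.isInternal_submodule_of_iSupIndep_of_iSup_eq_top
    f.independent_maxGenEigenspace f.iSup_maxGenEigenspace_eq_top
  -- trace of powers as sum over eigenvalues
  have key : ∀ k : ℕ, 1 ≤ k →
      ∑ μ ∈ hfin.toFinset, (finrank K (f.maxGenEigenspace μ) : K) * μ ^ k = 0 := by
    intro k hk
    have hmtk : ∀ μ : K, Set.MapsTo (f ^ k) (f.maxGenEigenspace μ) (f.maxGenEigenspace μ) :=
      fun μ => f.mapsTo_maxGenEigenspace_of_comm (Commute.pow_right rfl k) μ
    have ht := LinearMap.trace_eq_sum_trace_restrict' hds hfin hmtk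
    rw [h k hk] at ht
    have : ∀ μ ∈ hfin.toFinset,
        LinearMap.trace K _ ((f ^ k).restrict (hmtk μ))
          = (finrank K (f.maxGenEigenspace μ) : K) * μ ^ k := by
      intro μ _
      have hr : (f ^ k).restrict (hmtk μ) = (f.restrict (hmt μ)) ^ k :=
        (Module.End.pow_restrict k (hmt μ)).symm
      rw [hr, trace_pow_restrict_maxGen, mul_comm]
    rw [Finset.sum_congr rfl this] at ht
    exact ht.symm
  -- the nonzero eigenvalues
  set s : Finset K := hfin.toFinset.filter (fun μ => μ ≠ 0) with hs
  have hzero : s = ∅ := by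
    by_contra hne
    have hcard : ∀ i : Fin s.card, True := fun _ => trivial
    -- enumerate s
    let e := s.equivFin
    set m := s.card
    set v : Fin m → K := fun i => (e.symm i : K) with hv
    have hvinj : Function.Injective v := by
      intro i j hij
      exact e.symm.injective (Subtype.ext hij)
    have hvne : ∀ i, v i ≠ 0 := fun i => (Finset.mem_filter.mp (e.symm i).2).2
    set w : Fin m → K := fun i => (finrank K (f.maxGenEigenspace (v i)) : K) * v i with hw
    have hwz : w = 0 := by
      apply Matrix.eq_zero_of_forall_pow_sum_mul_pow_eq_zero hvinj
      intro i
      have hk := key (i + 1) (Nat.succ_le_succ (Nat.zero_le _))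
      have hsplit : ∑ μ ∈ hfin.toFinset, (finrank K (f.maxGenEigenspace μ) : K) * μ ^ ((i : ℕ) + 1)
          = ∑ μ ∈ s, (finrank K (f.maxGenEigenspace μ) : K) * μ ^ ((i : ℕ) + 1) := by
        rw [hs]
        refine (Finset.sum_filter_of_ne ?_).symm
        intro μ _ hne0 hμ0
        apply hne0
        rw [hμ0, zero_pow (Nat.succ_ne_zero _), mul_zero]
      have hsum : ∑ μ ∈ s, (finrank K (f.maxGenEigenspace μ) : K) * μ ^ ((i : ℕ) + 1) = 0 := by
        rw [← hsplit]; exact hk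
      calc ∑ j : Fin m, w j * v j ^ (i : ℕ)
          = ∑ j : Fin m, (fun μ : {x // x ∈ s} =>
              (finrank K (f.maxGenEigenspace (μ : K)) : K) * (μ : K) ^ ((i : ℕ) + 1)) (e.symm j) := by
            refine Finset.sum_congr rfl fun j _ => ?_
            simp only [hw, hv, pow_succ]
            ring
        _ = ∑ μ : {x // x ∈ s}, (finrank K (f.maxGenEigenspace (μ : K)) : K)
              * (μ : K) ^ ((i : ℕ) + 1) :=
            Fintype.sum_equiv e.symm _ _ (fun j => rfl)
        _ = ∑ μ ∈ s, (finrank K (f.maxGenEigenspace μ) : K) * μ ^ ((i : ℕ) + 1) :=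
            Finset.sum_coe_sort s
              (fun μ => (finrank K (f.maxGenEigenspace μ) : K) * μ ^ ((i : ℕ) + 1))
        _ = 0 := hsum
    -- contradiction: s nonempty and w = 0
    have hwne : ∀ j : Fin m, w j ≠ 0 := by
      intro j
      have hmem : v j ∈ s := (e.symm j).2
      have hb : f.maxGenEigenspace (v j) ≠ ⊥ :=
        (Set.Finite.mem_toFinset hfin).mp (Finset.mem_of_mem_filter _ hmem)
      have hpos : 1 ≤ finrank K (f.maxGenEigenspace (v j)) :=
        Submodule.one_le_finrank_iff.mpr hb
      have h1 : (finrank K (f.maxGenEigenspace (v j)) : K) ≠ 0 :=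
        Nat.cast_ne_zero.mpr (by omega)
      exact mul_ne_zero h1 (hvne j)
    obtain ⟨μ0, hμ0⟩ := Finset.nonempty_of_ne_empty hne
    exact hwne (e ⟨μ0, hμ0⟩) (congrFun hwz (e ⟨μ0, hμ0⟩))
  -- all nonzero eigenspaces trivial ⇒ maxGenEigenspace 0 = ⊤
  have htop : f.maxGenEigenspace 0 = ⊤ := by
    have hle : (⊤ : Submodule K V) ≤ f.maxGenEigenspace 0 := by
      rw [← f.iSup_maxGenEigenspace_eq_top]
      apply iSup_le
      intro μ
      rcases eq_or_ne μ 0 with rfl | hμ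
      · exact le_rfl
      · have : f.maxGenEigenspace μ = ⊥ := by
          by_contra hb
          have : μ ∈ s := by
            rw [hs, Finset.mem_filter, Set.Finite.mem_toFinset]
            exact ⟨hb, hμ⟩
          rw [hzero] at this
          exact absurd this (Finset.notMem_empty μ)
        rw [this]
        exact bot_le
    exact le_antisymm le_top hle
  -- conclude
  have h3 : ∀ x : V, ∃ k : ℕ, (f ^ k) x = 0 := by
    intro x
    have hx : x ∈ f.maxGenEigenspace 0 := htop ▸ Submodule.mem_top
    rw [Module.End.mem_maxGenEigenspace] at hx
    obtain ⟨k, hk⟩ := hx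
    exact ⟨k, by simpa using hk⟩
  exact ((LinearMap.charpoly_nilpotent_tfae f).out 2 0).mp h3

lemma matrix_isNilpotent_of_trace_pow {n : ℕ} (x : Matrix (Fin n) (Fin n) ℂ)
    (h : ∀ k : ℕ, 1 ≤ k → Matrix.trace (x ^ k) = 0) : IsNilpotent x := by
  have hf : IsNilpotent (Matrix.toLinAlgEquiv' x) := by
    apply isNilpotent_of_trace_pow_eq_zero
    intro k hk
    rw [← map_pow,
      LinearMap.trace_eq_matrix_trace ℂ (Pi.basisFun ℂ (Fin n)),
      LinearMap.toMatrix_eq_toMatrix']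
    have : LinearMap.toMatrix' (Matrix.toLinAlgEquiv' (x ^ k) : _) = x ^ k :=
      LinearMap.toMatrixAlgEquiv'_toLinAlgEquiv' (x ^ k)
    rw [this]
    exact h k hk
  obtain ⟨k, hk⟩ := hf
  refine ⟨k, Matrix.toLinAlgEquiv'.injective ?_⟩
  rw [map_pow, hk, map_zero]

/-- **Burnside's finiteness theorem for groups with finitely many traces.**
Let `G ⊆ GL(n, ℂ)` be a group acting irreducibly on `ℂⁿ` such that the set of traces
`{tr g : g ∈ G}` is finite.  Then `G` is finite. -/
theorem burnside_finite_traces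
    (n : ℕ) (G : Subgroup (Matrix.GeneralLinearGroup (Fin n) ℂ))
    (hirr : ∀ W : Submodule ℂ (Fin n → ℂ),
      (∀ g ∈ G, ∀ v ∈ W, Matrix.mulVec (g : Matrix (Fin n) (Fin n) ℂ) v ∈ W) →
      W = ⊥ ∨ W = ⊤)
    (hfin : {t : ℂ | ∃ g ∈ G, Matrix.trace (g : Matrix (Fin n) (Fin n) ℂ) = t}.Finite) :
    Finite G := by
  classical
  set T : Set ℂ := {t : ℂ | ∃ g ∈ G, Matrix.trace (g : Matrix (Fin n) (Fin n) ℂ) = t} with hT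
  set S : Set (Matrix (Fin n) (Fin n) ℂ) :=
    {m | ∃ g ∈ G, (g : Matrix (Fin n) (Fin n) ℂ) = m} with hS
  set A : Submodule ℂ (Matrix (Fin n) (Fin n) ℂ) := Submodule.span ℂ S with hA
  have hSA : S ⊆ (A : Set (Matrix (Fin n) (Fin n) ℂ)) := Submodule.subset_span
  have honeS : (1 : Matrix (Fin n) (Fin n) ℂ) ∈ S := ⟨1, G.one_mem, Units.val_one⟩
  have hone : (1 : Matrix (Fin n) (Fin n) ℂ) ∈ A := hSA honeS
  -- A is closed under multiplication
  have hmulS : ∀ m ∈ S, ∀ b ∈ A, m * b ∈ A := by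
    rintro m ⟨g, hg, rfl⟩ b hb
    refine Submodule.span_induction ?_ ?_ ?_ ?_ hb
    · rintro y ⟨h', hh', rfl⟩
      exact hSA ⟨g * h', G.mul_mem hg hh', Units.val_mul g h'⟩
    · rw [mul_zero]; exact A.zero_mem
    · intro y z _ _ hy hz
      rw [mul_add]; exact A.add_mem hy hz
    · intro c y _ hy
      rw [Matrix.mul_smul]; exact A.smul_mem c hy
  have hmul : ∀ a ∈ A, ∀ b ∈ A, a * b ∈ A := by
    intro a ha b hb
    refine Submodule.span_induction ?_ ?_ ?_ ?_ ha
    · intro m hm; exact hmulS m hm b hb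
    · rw [zero_mul]; exact A.zero_mem
    · intro y z _ _ hy hz
      rw [add_mul]; exact A.add_mem hy hz
    · intro c y _ hy
      rw [Matrix.smul_mul]; exact A.smul_mem c hy
  -- powers stay in A
  have hpow : ∀ a ∈ A, ∀ k : ℕ, a ^ k ∈ A := by
    intro a ha k
    induction k with
    | zero => simpa using hone
    | succ k ih => rw [pow_succ]; exact hmul _ ih _ ha
  -- a finite linearly independent subset of S spanning A
  obtain ⟨b, hbS, hbspan, hbind⟩ := exists_linearIndependent ℂ S
  have hbfin : b.Finite := hbind.setFinite
  -- the injection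
  have hTmem : ∀ (g : G) (m : Matrix (Fin n) (Fin n) ℂ), m ∈ b →
      Matrix.trace (((g : Matrix.GeneralLinearGroup (Fin n) ℂ) : Matrix (Fin n) (Fin n) ℂ) * m)
        ∈ T := by
    rintro ⟨g, hg⟩ m hm
    obtain ⟨h', hh', rfl⟩ := hbS hm
    exact ⟨g * h', G.mul_mem hg hh', by rw [Units.val_mul]⟩
  let φ : G → (b → T) := fun g m =>
    ⟨Matrix.trace (((g : Matrix.GeneralLinearGroup (Fin n) ℂ) : Matrix (Fin n) (Fin n) ℂ)
        * (m : Matrix (Fin n) (Fin n) ℂ)),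
      hTmem g m m.2⟩
  have hinj : Function.Injective φ := by
    intro g g' hgg'
    -- the difference has zero pairing with A
    set x : Matrix (Fin n) (Fin n) ℂ :=
      ((g : Matrix.GeneralLinearGroup (Fin n) ℂ) : Matrix (Fin n) (Fin n) ℂ)
      - ((g' : Matrix.GeneralLinearGroup (Fin n) ℂ) : Matrix (Fin n) (Fin n) ℂ) with hx
    have hxA : x ∈ A := A.sub_mem (hSA ⟨g, g.2, rfl⟩) (hSA ⟨g', g'.2, rfl⟩)
    have htr_b : ∀ m ∈ b, Matrix.trace (x * m) = 0 := by
      intro m hm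
      have heq : Matrix.trace
            (((g : Matrix.GeneralLinearGroup (Fin n) ℂ) : Matrix (Fin n) (Fin n) ℂ) * m)
          = Matrix.trace
            (((g' : Matrix.GeneralLinearGroup (Fin n) ℂ) : Matrix (Fin n) (Fin n) ℂ) * m) :=
        congrArg Subtype.val (congrFun hgg' ⟨m, hm⟩)
      rw [hx, Matrix.sub_mul, Matrix.trace_sub, heq, sub_self]
    have htr : ∀ a ∈ A, Matrix.trace (x * a) = 0 := by
      intro a ha
      rw [hA, ← hbspan] at ha
      refine Submodule.span_induction ?_ ?_ ?_ ?_ ha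
      · intro m hm; exact htr_b m hm
      · rw [mul_zero, Matrix.trace_zero]
      · intro y z _ _ hy hz
        rw [mul_add, Matrix.trace_add, hy, hz, add_zero]
      · intro c y _ hy
        rw [Matrix.mul_smul, Matrix.trace_smul, hy, smul_zero]
    -- x * a is nilpotent for every a ∈ A
    have hnil : ∀ a ∈ A, IsNilpotent (x * a) := by
      intro a ha
      apply matrix_isNilpotent_of_trace_pow
      intro k hk
      obtain ⟨j, rfl⟩ := Nat.exists_eq_add_of_le hk
      have : (x * a) ^ (1 + j) = x * (a * (x * a) ^ j) := by
        rw [add_comm 1 j, pow_succ', mul_assoc]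
      rw [this]
      exact htr _ (hmul a ha _ (hpow _ (hmul x hxA a ha) j))
    -- x = 0
    have hx0 : x = 0 := by
      by_contra hxne
      have hv : ∃ v : Fin n → ℂ, x *ᵥ v ≠ 0 := by
        by_contra hall
        push_neg at hall
        apply hxne
        apply Matrix.toLinAlgEquiv'.injective
        apply LinearMap.ext
        intro v
        rw [Matrix.toLinAlgEquiv'_apply, hall v, map_zero]
        rfl
      obtain ⟨v, hvne⟩ := hv
      set w : Fin n → ℂ := x *ᵥ v with hw
      set W : Submodule ℂ (Fin n → ℂ) :=
        Submodule.span ℂ {u | ∃ g'' ∈ G, ((g'' : Matrix (Fin n) (Fin n) ℂ)) *ᵥ w = u} with hW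
      have hWinv : ∀ g'' ∈ G, ∀ u ∈ W, ((g'' : Matrix (Fin n) (Fin n) ℂ)) *ᵥ u ∈ W := by
        intro h hh u hu
        refine Submodule.span_induction ?_ ?_ ?_ ?_ hu
        · rintro y ⟨h2, hh2, rfl⟩
          apply Submodule.subset_span
          refine ⟨h * h2, G.mul_mem hh hh2, ?_⟩
          rw [Units.val_mul, ← Matrix.mulVec_mulVec]
        · rw [Matrix.mulVec_zero]; exact W.zero_mem
        · intro y z _ _ hy hz
          rw [Matrix.mulVec_add]; exact W.add_mem hy hz
        · intro c y _ hy
          rw [Matrix.mulVec_smul]; exact W.smul_mem c hy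
      have hwW : w ∈ W := Submodule.subset_span ⟨1, G.one_mem, by rw [Units.val_one, Matrix.one_mulVec]⟩
      have hWtop : W = ⊤ := by
        rcases hirr W hWinv with hbot | htop
        · exfalso
          apply hvne
          have := hbot ▸ hwW
          simpa using this
        · exact htop
      -- v is in the image of A acting on w
      let L : Matrix (Fin n) (Fin n) ℂ →ₗ[ℂ] (Fin n → ℂ) :=
        { toFun := fun m => m *ᵥ w
          map_add' := fun m₁ m₂ => Matrix.add_mulVec m₁ m₂ w
          map_smul' := fun c m => Matrix.smul_mulVec c m w }
      have hWle : W ≤ A.map L := by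
        rw [hW]
        apply Submodule.span_le.mpr
        rintro u ⟨h2, hh2, rfl⟩
        exact ⟨_, hSA ⟨h2, hh2, rfl⟩, rfl⟩
      have hvW : v ∈ A.map L := hWle (hWtop ▸ Submodule.mem_top)
      obtain ⟨a, haA, hav⟩ := hvW
      have hav' : (a * x) *ᵥ v = v := by
        have : L a = a *ᵥ w := rfl
        rw [this, hw, Matrix.mulVec_mulVec] at hav
        exact hav
      have hnil_ax : IsNilpotent (a * x) := by
        obtain ⟨k, hk⟩ := hnil a haA
        refine ⟨k + 1, ?_⟩
        have hkey : ∀ j : ℕ, (a * x) ^ (j + 1) = a * ((x * a) ^ j * x) := by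
          intro j
          induction j with
          | zero => simp [mul_assoc]
          | succ j ih =>
            rw [pow_succ' (a * x) (j + 1), ih, pow_succ' (x * a) j]
            simp only [mul_assoc]
        rw [hkey k, hk, zero_mul, mul_zero]
      obtain ⟨k, hk⟩ := hnil_ax
      have hfix : ∀ j : ℕ, ((a * x) ^ j) *ᵥ v = v := by
        intro j
        induction j with
        | zero => rw [pow_zero, Matrix.one_mulVec]
        | succ j ih =>
          rw [pow_succ', ← Matrix.mulVec_mulVec]
          rw [ih, hav']
      have : v = 0 := by
        have := hfix k
        rw [hk, Matrix.zero_mulVec] at this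
        exact this.symm
      apply hvne
      rw [hw, this, Matrix.mulVec_zero]
    -- conclude g = g'
    rw [hx, sub_eq_zero] at hx0
    exact Subtype.ext (Units.ext hx0)
  haveI : Finite b := hbfin.to_subtype
  haveI : Finite T := hfin.to_subtype
  exact Finite.of_injective φ hinj
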